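/- There exists an absolute constant C > 0 such that the following holds for all n ≥ 1, all r, ℓ ≥ 1 with 6r ≤ ℓ and 2ℓ ≤ n. Assume the lower-left corner of A_n is the origin, set o_i = (iℓ, 2r) for 1 ≤ i ≤ ⌊n/(2ℓ)⌋, and let 𝒞_i be the discrete ball of radius r centered at o_i. Then for all i ≠ j and every x ∈ 𝒞_i, the simple random walk on ℤ² started at x satisfies P_x(τ_{∂𝒞_j} < τ_{∂A_n}) ≤ C √(r/ℓ). -/

import Mathlib

open MeasureTheory ProbabilityTheory

noncomputable section

attribute [local instance] Classical.propDecidable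

set_option maxHeartbeats 2000000

/-- The four unit steps of the simple random walk on `ℤ²`. -/
def stepDir : Fin 4 → ℤ × ℤ := ![(1, 0), (-1, 0), (0, 1), (0, -1)]

/-- Position after `i` steps of the walk started at `x`, where `s` records the
first `k` steps of the walk. -/
def walkPos (x : ℤ × ℤ) {k : ℕ} (s : Fin k → Fin 4) (i : ℕ) : ℤ × ℤ :=
  x + ∑ j : Fin k, if (j : ℕ) < i then stepDir (s j) else 0

/-- The Green function `G_U(x,y)` of simple random walk on `ℤ²` killed at the hitting
time `τ_U` of `U`:  `G_U(x,y) = E_x [∑_{k=0}^{τ_U - 1} 1_{S_k = y}]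
= ∑_k P_x(S_k = y, S_0,…,S_k ∉ U)`. -/
def green (U : Set (ℤ × ℤ)) (x y : ℤ × ℤ) : ℝ :=
  ∑' k : ℕ, (Nat.card {s : Fin k → Fin 4 //
      (∀ i ≤ k, walkPos x s i ∉ U) ∧ walkPos x s k = y} : ℝ) / 4 ^ k

/-- `hitProbBefore x A B = P_x(τ_A < τ_B)` for simple random walk on `ℤ²` started at `x`:
the walk is in `A \ B` at the first time it visits `A ∪ B`. -/
def hitProbBefore (x : ℤ × ℤ) (A B : Set (ℤ × ℤ)) : ℝ :=
  ∑' k : ℕ, (Nat.card {s : Fin k → Fin 4 //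
      (∀ i < k, walkPos x s i ∉ A ∪ B) ∧ walkPos x s k ∈ A ∧ walkPos x s k ∉ B} : ℝ) / 4 ^ k

/-- Adjacency (nearest neighbours) in `ℤ²`. -/
def adj (a b : ℤ × ℤ) : Prop := (a.1 - b.1).natAbs + (a.2 - b.2).natAbs = 1

/-- Inner boundary of a set `A ⊆ ℤ²`. -/
def bdry (A : Set (ℤ × ℤ)) : Set (ℤ × ℤ) := {v | v ∈ A ∧ ∃ u, u ∉ A ∧ adj v u}

/-- The box `A_n = {0,…,n}²` as a finset of `ℤ²`. -/
def boxF (n : ℕ) : Finset (ℤ × ℤ) := Finset.Icc (0, 0) ((n : ℤ), (n : ℤ))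

lemma boxF_nonempty (n : ℕ) : (boxF n).Nonempty :=
  ⟨(0, 0), Finset.mem_Icc.mpr ⟨le_rfl, ⟨Int.natCast_nonneg n, Int.natCast_nonneg n⟩⟩⟩

/-- The discrete (Euclidean) ball of radius `r` centered at `o`, as a subset of `ℤ²`. -/
def ballSet (o : ℤ × ℤ) (r : ℕ) : Set (ℤ × ℤ) :=
  {y | (y.1 - o.1) ^ 2 + (y.2 - o.2) ^ 2 ≤ (r : ℤ) ^ 2}

/-- The discrete (Euclidean) ball of radius `r` centered at `o`, as a finset of `ℤ²`. -/
def ballF (o : ℤ × ℤ) (r : ℕ) : Finset (ℤ × ℤ) :=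
  (Finset.Icc (o - ((r : ℤ), (r : ℤ))) (o + ((r : ℤ), (r : ℤ)))).filter
    (fun y => (y.1 - o.1) ^ 2 + (y.2 - o.2) ^ 2 ≤ (r : ℤ) ^ 2)

/-- Inner boundary of a finset of `ℤ²`, as a finset. -/
def bdryF (A : Finset (ℤ × ℤ)) : Finset (ℤ × ℤ) := A.filter (fun v => ∃ u, u ∉ A ∧ adj v u)

lemma walkPos_zero (x : ℤ × ℤ) {k : ℕ} (s : Fin k → Fin 4) : walkPos x s 0 = x := by
  simp [walkPos]

lemma walkPos_succ (x : ℤ × ℤ) {k : ℕ} (s : Fin k → Fin 4) (i : ℕ) (hi : i < k) :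
    walkPos x s (i + 1) = walkPos x s i + stepDir (s ⟨i, hi⟩) := by
  unfold walkPos
  have : (Finset.univ.filter (fun j : Fin k => (j : ℕ) < i + 1))
      = insert (⟨i, hi⟩ : Fin k) (Finset.univ.filter (fun j : Fin k => (j : ℕ) < i)) := by
    ext j
    simp only [Finset.mem_filter, Finset.mem_insert, Finset.mem_univ, true_and, Fin.ext_iff]
    have := j.isLt
    omega
  rw [← Finset.sum_filter, ← Finset.sum_filter, this, Finset.sum_insert (by simp)]
  abel

lemma walkPos_stable (x : ℤ × ℤ) {k : ℕ} (s : Fin k → Fin 4) {i : ℕ} (h : k ≤ i) :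
    walkPos x s i = walkPos x s k := by
  unfold walkPos
  congr 1
  apply Finset.sum_congr rfl
  intro j _
  have hj := j.isLt
  simp only [if_pos (by omega : (j:ℕ) < i), if_pos hj]

lemma walkPos_castLE (x : ℤ × ℤ) {k K : ℕ} (h : k ≤ K) (s : Fin K → Fin 4) :
    ∀ i ≤ k, walkPos x (fun j => s (Fin.castLE h j)) i = walkPos x s i := by
  intro i hi
  induction i with
  | zero => rw [walkPos_zero, walkPos_zero]
  | succ m ih =>
      have hm : m < k := hi
      rw [walkPos_succ x _ m hm, walkPos_succ x s m (lt_of_lt_of_le hm h),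
        ih (le_of_lt hm)]
      rfl

lemma walkPos_snoc (x : ℤ × ℤ) {N : ℕ} (s : Fin N → Fin 4) (a : Fin 4) :
    ∀ i ≤ N, walkPos x (Fin.snoc s a : Fin (N+1) → Fin 4) i = walkPos x s i := by
  intro i hi
  have : s = fun j => (Fin.snoc s a : Fin (N+1) → Fin 4) (Fin.castLE (Nat.le_succ N) j) := by
    funext j
    have : Fin.castLE (Nat.le_succ N) j = Fin.castSucc j := by
      apply Fin.ext; rfl
    rw [this, Fin.snoc_castSucc]
  conv_rhs => rw [this]
  rw [walkPos_castLE x (Nat.le_succ N) _ i hi]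

lemma walkPos_snoc_top (x : ℤ × ℤ) {N : ℕ} (s : Fin N → Fin 4) (a : Fin 4) :
    walkPos x (Fin.snoc s a : Fin (N+1) → Fin 4) (N+1) = walkPos x s N + stepDir a := by
  rw [walkPos_succ x _ N (Nat.lt_succ_self N), walkPos_snoc x s a N le_rfl]
  congr 1
  have : (⟨N, Nat.lt_succ_self N⟩ : Fin (N+1)) = Fin.last N := rfl
  rw [this, Fin.snoc_last]

def snocEquiv (N : ℕ) : ((Fin N → Fin 4) × Fin 4) ≃ (Fin (N+1) → Fin 4) where
  toFun z := Fin.snoc z.1 z.2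
  invFun s := (Fin.init s, s (Fin.last N))
  left_inv z := by simp [Fin.init_snoc, Fin.snoc_last]
  right_inv s := by simp [Fin.snoc_init_self]

lemma sum_snoc {N : ℕ} {M : Type*} [AddCommMonoid M] (f : (Fin (N+1) → Fin 4) → M) :
    ∑ s : Fin (N+1) → Fin 4, f s
      = ∑ s : Fin N → Fin 4, ∑ a : Fin 4, f (Fin.snoc s a) := by
  rw [← Equiv.sum_comp (snocEquiv N) f, Fintype.sum_prod_type]
  rfl

lemma card_filter_snoc {N : ℕ} (P : (Fin (N+1) → Fin 4) → Prop) [DecidablePred P] :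
    (Finset.univ.filter P).card
      = ∑ s : Fin N → Fin 4, ∑ a : Fin 4,
          (if P (Fin.snoc s a) then 1 else 0) := by
  rw [Finset.card_filter]
  exact sum_snoc _

lemma card_cylinder {k : ℕ} (p : (Fin k → Fin 4) → Prop) [DecidablePred p] :
    ∀ (K : ℕ) (h : k ≤ K),
    (Finset.univ.filter (fun s : Fin K → Fin 4 => p (fun j => s (Fin.castLE h j)))).card
      = (Finset.univ.filter p).card * 4 ^ (K - k) := by
  intro K
  induction K with
  | zero =>
      intro h
      have hk : k = 0 := Nat.le_zero.mp h
      subst hk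
      simp only [Nat.sub_zero, pow_zero, mul_one]
      congr 1
  | succ K ih =>
      intro h
      rcases Nat.lt_or_ge k (K+1) with hlt | hge
      · have hkK : k ≤ K := Nat.lt_succ_iff.mp hlt
        rw [card_filter_snoc]
        have key : ∀ (s : Fin K → Fin 4) (a : Fin 4),
            (fun j => (Fin.snoc s a : Fin (K+1) → Fin 4) (Fin.castLE h j))
              = (fun j => s (Fin.castLE hkK j)) := by
          intro s a
          funext j
          have h1 : (Fin.castLE h j : Fin (K+1)) = Fin.castSucc (Fin.castLE hkK j) := by
            apply Fin.ext; rfl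
          rw [h1, Fin.snoc_castSucc]
        have : ∀ s : Fin K → Fin 4, ∑ a : Fin 4,
            (if p (fun j => (Fin.snoc s a : Fin (K+1) → Fin 4) (Fin.castLE h j)) then 1 else 0)
            = 4 * (if p (fun j => s (Fin.castLE hkK j)) then 1 else 0) := by
          intro s
          simp only [key]
          simp [Finset.sum_const]
        rw [Finset.sum_congr rfl (fun s _ => this s)]
        rw [← Finset.mul_sum, ← Finset.card_filter, ih hkK]
        have : K + 1 - k = (K - k) + 1 := by omega
        rw [this]
        ring
      · have hk : k = K + 1 := le_antisymm h hge
        subst hk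
        simp only [Nat.sub_self, pow_zero, mul_one]
        congr 1

def vd {N : ℕ} (s : Fin N → Fin 4) : ℤ := ∑ j, (stepDir (s j)).2

def cnt (N : ℕ) (m : ℤ) : ℕ :=
  (Finset.univ.filter (fun s : Fin N → Fin 4 => vd s = m)).card

def Fc (N : ℕ) (m : ℤ) : ℕ :=
  if (N : ℤ) + m < 0 then 0 else (2 * N).choose ((N : ℤ) + m).toNat

lemma vd_snoc {N : ℕ} (s : Fin N → Fin 4) (a : Fin 4) :
    vd (Fin.snoc s a : Fin (N+1) → Fin 4) = vd s + (stepDir a).2 := by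
  unfold vd
  rw [Fin.sum_univ_castSucc]
  simp [Fin.snoc_castSucc, Fin.snoc_last]

lemma walkPos_eq_add {N : ℕ} (x : ℤ × ℤ) (s : Fin N → Fin 4) :
    walkPos x s N = x + ∑ j, stepDir (s j) := by
  unfold walkPos
  congr 1
  exact Finset.sum_congr rfl (fun j _ => if_pos j.isLt)

lemma walkPos_snd {N : ℕ} (x : ℤ × ℤ) (s : Fin N → Fin 4) :
    (walkPos x s N).2 = x.2 + vd s := by
  rw [walkPos_eq_add]
  simp [vd, Prod.snd_sum]

lemma cnt_succ (N : ℕ) (m : ℤ) :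
    cnt (N+1) m = 2 * cnt N m + cnt N (m-1) + cnt N (m+1) := by
  unfold cnt
  rw [card_filter_snoc]
  have : ∀ s : Fin N → Fin 4,
      (∑ a : Fin 4, if vd (Fin.snoc s a : Fin (N+1) → Fin 4) = m then 1 else 0)
      = ((if vd s = m then 1 else 0) + (if vd s = m then 1 else 0)
          + (if vd s = m - 1 then 1 else 0) + (if vd s = m + 1 then 1 else 0) : ℕ) := by
    intro s
    rw [Fin.sum_univ_four]
    simp only [vd_snoc]
    have e0 : (stepDir 0).2 = 0 := rfl
    have e1 : (stepDir 1).2 = 0 := rfl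
    have e2 : (stepDir 2).2 = 1 := rfl
    have e3 : (stepDir 3).2 = -1 := rfl
    rw [e0, e1, e2, e3]
    congr 1
    · congr 1
      · congr 1 <;> [skip; skip] <;> simp [add_zero]
      · by_cases h : vd s = m - 1 <;> simp [h] <;> omega
    · by_cases h : vd s = m + 1 <;> simp [h] <;> omega
  rw [Finset.sum_congr rfl (fun s _ => this s)]
  rw [Finset.sum_add_distrib, Finset.sum_add_distrib, Finset.sum_add_distrib]
  simp only [← Finset.card_filter]
  ring

lemma cnt_zero (m : ℤ) : cnt 0 m = if m = 0 then 1 else 0 := by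
  unfold cnt
  rcases eq_or_ne m 0 with rfl | hm
  · rw [if_pos rfl]
    have : (Finset.univ.filter (fun s : Fin 0 → Fin 4 => vd s = 0)) = Finset.univ := by
      apply Finset.filter_true_of_mem
      intro s _
      simp [vd]
    rw [this]
    simp [Fintype.card_pi]
  · rw [if_neg hm]
    rw [Finset.card_eq_zero]
    apply Finset.filter_false_of_mem
    intro s _
    have : vd s = 0 := by simp [vd]
    rw [this]
    exact fun h => hm h.symm

lemma Fc_succ (N : ℕ) (m : ℤ) :
    Fc (N+1) m = 2 * Fc N m + Fc N (m-1) + Fc N (m+1) := by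
  unfold Fc
  push_cast
  by_cases hA : (N:ℤ) + m ≤ -2
  · rw [if_pos (by omega), if_pos (by omega), if_pos (by omega), if_pos (by omega)]
  · by_cases hB : (N:ℤ) + m = -1
    · rw [if_neg (by omega), if_pos (by omega), if_pos (by omega), if_neg (by omega)]
      rw [show ((N:ℤ) + 1 + m).toNat = 0 by omega, show ((N:ℤ) + (m+1)).toNat = 0 by omega]
      simp
    · by_cases hC : (N:ℤ) + m = 0
      · rw [if_neg (by omega), if_neg (by omega), if_pos (by omega), if_neg (by omega)]
        rw [show ((N:ℤ) + 1 + m).toNat = 1 by omega, show ((N:ℤ) + m).toNat = 0 by omega,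
          show ((N:ℤ) + (m+1)).toNat = 1 by omega]
        rw [Nat.choose_one_right, Nat.choose_one_right, Nat.choose_zero_right]
        omega
      · have hpos : 1 ≤ (N:ℤ) + m := by omega
        rw [if_neg (by omega), if_neg (by omega), if_neg (by omega), if_neg (by omega)]
        set u : ℕ := ((N:ℤ) + m).toNat with hu
        have hu1 : 1 ≤ u := by omega
        have e1 : ((N:ℤ) + 1 + m).toNat = u + 1 := by omega
        have e2 : ((N:ℤ) + (m-1)).toNat = u - 1 := by omega
        have e3 : ((N:ℤ) + (m+1)).toNat = u + 1 := by omega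
        rw [e1, e2, e3]
        have h2N : 2 * (N+1) = (2*N + 1) + 1 := by ring
        rw [h2N, Nat.choose_succ_succ]
        have hsplit1 : (2*N+1).choose u = (2*N).choose (u-1) + (2*N).choose u := by
          obtain ⟨v, hv⟩ : ∃ v, u = v + 1 := ⟨u - 1, by omega⟩
          rw [hv]
          simp [Nat.choose_succ_succ]
        have hsplit2 : (2*N+1).choose (u+1) = (2*N).choose u + (2*N).choose (u+1) :=
          Nat.choose_succ_succ _ _
        rw [hsplit1, hsplit2]
        ring

lemma cnt_eq_Fc (N : ℕ) : ∀ m : ℤ, cnt N m = Fc N m := by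
  induction N with
  | zero =>
      intro m
      rw [cnt_zero]
      unfold Fc
      rcases lt_trichotomy m 0 with h | rfl | h
      · rw [if_neg (by omega), if_pos (by omega)]
      · norm_num
      · rw [if_neg (by omega), if_neg (by omega)]
        have : (0 + m).toNat ≥ 1 := by omega
        rw [Nat.choose_eq_zero_of_lt (by omega)]
  | succ N ih =>
      intro m
      rw [cnt_succ, Fc_succ, ih, ih, ih]

lemma cnt_le_centralBinom (N : ℕ) (m : ℤ) : cnt N m ≤ Nat.centralBinom N := by
  rw [cnt_eq_Fc]
  unfold Fc
  split
  · exact Nat.zero_le _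
  · have := Nat.choose_le_middle (((N:ℤ) + m).toNat) (2*N)
    rwa [show 2 * N / 2 = N by omega] at this

lemma centralBinom_sqrt : ∀ N : ℕ, (Nat.centralBinom N : ℝ) * Real.sqrt (N+1) ≤ 4 ^ N := by
  intro N
  induction N with
  | zero => simp [Nat.centralBinom]
  | succ N ih =>
      have hrec := Nat.succ_mul_centralBinom_succ N
      have hrecR : ((N:ℝ) + 1) * (Nat.centralBinom (N+1) : ℝ)
          = 2 * (2 * N + 1) * (Nat.centralBinom N : ℝ) := by
        exact_mod_cast congrArg (Nat.cast : ℕ → ℝ) hrec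
      have haux : 2 * (2 * (N:ℝ) + 1) * Real.sqrt ((N:ℝ)+2) ≤ 4 * ((N:ℝ)+1) * Real.sqrt ((N:ℝ)+1) := by
        have h1 : 2 * (2 * (N:ℝ) + 1) * Real.sqrt ((N:ℝ)+2)
            = Real.sqrt ((2 * (2 * (N:ℝ) + 1))^2 * ((N:ℝ)+2)) := by
          rw [Real.sqrt_mul (sq_nonneg _), Real.sqrt_sq (by positivity)]
        have h2 : 4 * ((N:ℝ)+1) * Real.sqrt ((N:ℝ)+1)
            = Real.sqrt ((4 * ((N:ℝ)+1))^2 * ((N:ℝ)+1)) := by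
          rw [Real.sqrt_mul (sq_nonneg _), Real.sqrt_sq (by positivity)]
        rw [h1, h2]
        apply Real.sqrt_le_sqrt
        nlinarith [sq_nonneg ((N:ℝ))]
      have hpos : (0:ℝ) < (N:ℝ) + 1 := by positivity
      have key : ((N:ℝ)+1) * ((Nat.centralBinom (N+1) : ℝ) * Real.sqrt ((N:ℝ)+1+1))
          ≤ ((N:ℝ)+1) * 4 ^ (N+1) := by
        have harg : ((N:ℝ)+1+1) = ((N:ℝ)+2) := by ring
        rw [harg]
        calc ((N:ℝ)+1) * ((Nat.centralBinom (N+1) : ℝ) * Real.sqrt ((N:ℝ)+2))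
            = (Nat.centralBinom N : ℝ) * (2 * (2 * (N:ℝ) + 1) * Real.sqrt ((N:ℝ)+2)) := by
              rw [← mul_assoc, hrecR]
              ring
          _ ≤ (Nat.centralBinom N : ℝ) * (4 * ((N:ℝ)+1) * Real.sqrt ((N:ℝ)+1)) := by
              apply mul_le_mul_of_nonneg_left haux (by positivity)
          _ = (4 * ((N:ℝ)+1)) * ((Nat.centralBinom N : ℝ) * Real.sqrt ((N:ℝ)+1)) := by ring
          _ ≤ (4 * ((N:ℝ)+1)) * 4 ^ N := by
              apply mul_le_mul_of_nonneg_left ih (by positivity)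
          _ = ((N:ℝ)+1) * 4 ^ (N+1) := by ring
      have hfin := le_of_mul_le_mul_left key hpos
      have harg2 : (((N+1:ℕ)):ℝ) + 1 = (N:ℝ)+1+1 := by push_cast; ring
      rw [harg2]
      exact hfin

def vflip : Fin 4 → Fin 4 := ![0, 1, 3, 2]

lemma stepDir_vflip (a : Fin 4) :
    stepDir (vflip a) = ((stepDir a).1, -(stepDir a).2) := by
  fin_cases a <;> rfl

lemma vflip_vflip (a : Fin 4) : vflip (vflip a) = a := by
  fin_cases a <;> rfl

lemma vstep_bound (a : Fin 4) : (stepDir a).2 = 0 ∨ (stepDir a).2 = 1 ∨ (stepDir a).2 = -1 := by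
  fin_cases a
  · exact Or.inl rfl
  · exact Or.inl rfl
  · exact Or.inr (Or.inl rfl)
  · exact Or.inr (Or.inr rfl)

section Reflection

variable (x : ℤ × ℤ) {N : ℕ}

/-- discrete intermediate value: if the vertical coordinate starts `≥ 1` and is
`≤ 0` at some time, it is `= 0` at some time. -/
lemma exists_zero (hx : 1 ≤ x.2) (s : Fin N → Fin 4) :
    ∀ i, (walkPos x s i).2 ≤ 0 → ∃ t, (walkPos x s t).2 = 0 := by
  intro i
  induction i with
  | zero =>
      intro h
      rw [walkPos_zero] at h
      omega
  | succ i ih =>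
      intro h
      rcases Nat.lt_or_ge i N with hiN | hiN
      · rcases eq_or_lt_of_le h with heq | hlt
        · exact ⟨i+1, heq⟩
        · rw [walkPos_succ x s i hiN] at h hlt
          have := vstep_bound (s ⟨i, hiN⟩)
          apply ih
          simp only [Prod.snd_add] at h hlt
          omega
      · apply ih
        have : walkPos x s (i+1) = walkPos x s i := by
          rw [walkPos_stable x s (by omega : N ≤ i+1), walkPos_stable x s hiN]
        rw [this] at h
        exact h

/-- The reflected path: flip vertical steps from the first time the vertical
coordinate hits `0`. -/
def reflW {N : ℕ} (s : Fin N → Fin 4) : Fin N → Fin 4 :=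
  if hs : ∃ t, (walkPos x s t).2 = 0 then
    (fun j => if (j : ℕ) < Nat.find hs then s j else vflip (s j))
  else s

lemma find_le_N (s : Fin N → Fin 4) (hs : ∃ t, (walkPos x s t).2 = 0) :
    Nat.find hs ≤ N := by
  by_contra hcon
  push_neg at hcon
  have h0 : (walkPos x s (Nat.find hs)).2 = 0 := Nat.find_spec hs
  rw [walkPos_stable x s (le_of_lt hcon)] at h0
  exact absurd h0 (Nat.find_min hs hcon)

lemma reflW_eq_before (s : Fin N → Fin 4) (hs : ∃ t, (walkPos x s t).2 = 0) :
    ∀ i ≤ Nat.find hs, walkPos x (reflW x s) i = walkPos x s i := by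
  intro i hi
  induction i with
  | zero => rw [walkPos_zero, walkPos_zero]
  | succ i ih =>
      have hiN : i < N := lt_of_lt_of_le hi (find_le_N x s hs)
      rw [walkPos_succ x _ i hiN, walkPos_succ x s i hiN, ih (by omega)]
      congr 1
      unfold reflW
      rw [dif_pos hs]
      simp only [if_pos (show i < Nat.find hs by omega)]

lemma reflW_snd_after (s : Fin N → Fin 4) (hs : ∃ t, (walkPos x s t).2 = 0) :
    ∀ i, Nat.find hs ≤ i → (walkPos x (reflW x s) i).2 = -(walkPos x s i).2 := by
  intro i
  induction i with
  | zero =>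
      intro h
      have h0 : Nat.find hs = 0 := by omega
      rw [walkPos_zero, walkPos_zero]
      have := Nat.find_spec hs
      rw [h0, walkPos_zero] at this
      omega
  | succ i ih =>
      intro h
      rcases Nat.lt_or_ge i N with hiN | hiN
      · rcases Nat.lt_or_ge i (Nat.find hs) with hlt | hge
        · -- i + 1 = find
          have hfind : Nat.find hs = i + 1 := by omega
          rw [reflW_eq_before x s hs (i+1) (by omega)]
          have := Nat.find_spec hs
          rw [hfind] at this
          omega
        · rw [walkPos_succ x _ i hiN, walkPos_succ x s i hiN]
          simp only [Prod.snd_add]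
          rw [ih hge]
          have hstep : (reflW x s) ⟨i, hiN⟩ = vflip (s ⟨i, hiN⟩) := by
            unfold reflW
            rw [dif_pos hs]
            simp only [if_neg (show ¬ (i < Nat.find hs) by omega)]
          rw [hstep, stepDir_vflip]
          ring
      · have e1 : walkPos x (reflW x s) (i+1) = walkPos x (reflW x s) i := by
          rw [walkPos_stable x _ (by omega : N ≤ i+1), walkPos_stable x _ hiN]
        have e2 : walkPos x s (i+1) = walkPos x s i := by
          rw [walkPos_stable x _ (by omega : N ≤ i+1), walkPos_stable x _ hiN]
        rw [e1, e2]
        exact ih (by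
          rcases Nat.lt_or_ge i (Nat.find hs) with hlt | hge
          · exfalso
            have := find_le_N x s hs
            omega
          · exact hge)

lemma reflW_hit (s : Fin N → Fin 4) (hs : ∃ t, (walkPos x s t).2 = 0) :
    ∃ t, (walkPos x (reflW x s) t).2 = 0 :=
  ⟨Nat.find hs, by rw [reflW_eq_before x s hs _ le_rfl]; exact Nat.find_spec hs⟩

lemma reflW_find (s : Fin N → Fin 4) (hs : ∃ t, (walkPos x s t).2 = 0)
    (hs' : ∃ t, (walkPos x (reflW x s) t).2 = 0) :
    Nat.find hs' = Nat.find hs := by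
  apply le_antisymm
  · apply Nat.find_le
    rw [reflW_eq_before x s hs _ le_rfl]
    exact Nat.find_spec hs
  · by_contra hcon
    push_neg at hcon
    have h0 : (walkPos x (reflW x s) (Nat.find hs')).2 = 0 := Nat.find_spec hs'
    rw [reflW_eq_before x s hs _ (le_of_lt hcon)] at h0
    exact absurd h0 (Nat.find_min hs hcon)

lemma reflW_apply (s : Fin N → Fin 4) (hs : ∃ t, (walkPos x s t).2 = 0) :
    reflW x s = fun j : Fin N => if (j : ℕ) < Nat.find hs then s j else vflip (s j) := by
  unfold reflW
  rw [dif_pos hs]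

lemma reflW_reflW (s : Fin N → Fin 4) (hs : ∃ t, (walkPos x s t).2 = 0) :
    reflW x (reflW x s) = s := by
  have hs' := reflW_hit x s hs
  funext j
  have h1 := congrFun (reflW_apply x (reflW x s) hs') j
  have h2 := congrFun (reflW_apply x s hs) j
  rw [h1, reflW_find x s hs hs', h2]
  by_cases hj : (j : ℕ) < Nat.find hs
  · simp only [if_pos hj]
  · simp only [if_neg hj, vflip_vflip]

lemma card_S1_eq_S2 (hx : 1 ≤ x.2) :
    (Finset.univ.filter (fun s : Fin N → Fin 4 =>
        (∃ t, (walkPos x s t).2 = 0) ∧ 1 ≤ (walkPos x s N).2)).card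
    = (Finset.univ.filter (fun s : Fin N → Fin 4 => (walkPos x s N).2 ≤ -1)).card := by
  apply Finset.card_bij' (fun s _ => reflW x s) (fun s _ => reflW x s)
  · intro s hsmem
    rw [Finset.mem_filter] at hsmem ⊢
    obtain ⟨-, hs, hYN⟩ := hsmem
    refine ⟨Finset.mem_univ _, ?_⟩
    rw [reflW_snd_after x s hs N (find_le_N x s hs)]
    omega
  · intro s hsmem
    rw [Finset.mem_filter] at hsmem ⊢
    obtain ⟨-, hYN⟩ := hsmem
    have hs : ∃ t, (walkPos x s t).2 = 0 := exists_zero x hx s N (by omega)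
    refine ⟨Finset.mem_univ _, reflW_hit x s hs, ?_⟩
    rw [reflW_snd_after x s hs N (find_le_N x s hs)]
    omega
  · intro s hsmem
    rw [Finset.mem_filter] at hsmem
    exact reflW_reflW x s hsmem.2.1
  · intro s hsmem
    rw [Finset.mem_filter] at hsmem
    exact reflW_reflW x s (exists_zero x hx s N (by omega))

lemma card_YN_split (hx : 1 ≤ x.2) :
    (Finset.univ.filter (fun s : Fin N → Fin 4 => 1 ≤ (walkPos x s N).2)).card
    = (Finset.univ.filter (fun s : Fin N → Fin 4 => ∀ i ≤ N, 1 ≤ (walkPos x s i).2)).card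
      + (Finset.univ.filter (fun s : Fin N → Fin 4 =>
          (∃ t, (walkPos x s t).2 = 0) ∧ 1 ≤ (walkPos x s N).2)).card := by
  rw [← Finset.card_union_of_disjoint]
  · congr 1
    ext s
    simp only [Finset.mem_filter, Finset.mem_union, Finset.mem_univ, true_and]
    constructor
    · intro hYN
      by_cases hsurv : ∀ i ≤ N, 1 ≤ (walkPos x s i).2
      · exact Or.inl hsurv
      · push_neg at hsurv
        obtain ⟨i, hiN, hYi⟩ := hsurv
        exact Or.inr ⟨exists_zero x hx s i (by omega), hYN⟩
    · rintro (hsurv | ⟨-, hYN⟩)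
      · exact hsurv N le_rfl
      · exact hYN
  · rw [Finset.disjoint_left]
    intro s hmem1 hmem2
    rw [Finset.mem_filter] at hmem1 hmem2
    obtain ⟨-, hsurv⟩ := hmem1
    obtain ⟨-, ⟨t, ht⟩, -⟩ := hmem2
    rcases Nat.lt_or_ge t N with htN | htN
    · have := hsurv t (le_of_lt htN)
      omega
    · rw [walkPos_stable x s htN] at ht
      have := hsurv N le_rfl
      omega

lemma vd_bound (s : Fin N → Fin 4) : -(N:ℤ) ≤ vd s ∧ vd s ≤ N := by
  have h1 : |vd s| ≤ (N : ℤ) := by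
    calc |vd s| ≤ ∑ j : Fin N, |(stepDir (s j)).2| := Finset.abs_sum_le_sum_abs _ _
      _ ≤ ∑ _j : Fin N, (1:ℤ) := by
          apply Finset.sum_le_sum
          intro j _
          have := vstep_bound (s j)
          rcases this with h | h | h <;> rw [h] <;> norm_num
      _ = N := by simp
  constructor <;> [skip; skip] <;> (have := abs_le.mp h1; omega)

lemma cnt_symm (N' : ℕ) (m : ℤ) : cnt N' m = cnt N' (-m) := by
  unfold cnt
  apply Finset.card_bij' (fun s _ => vflip ∘ s) (fun s _ => vflip ∘ s)
  · intro s hsmem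
    rw [Finset.mem_filter] at hsmem ⊢
    refine ⟨Finset.mem_univ _, ?_⟩
    have : vd (vflip ∘ s) = - vd s := by
      unfold vd
      rw [← Finset.sum_neg_distrib]
      apply Finset.sum_congr rfl
      intro j _
      rw [Function.comp_apply, stepDir_vflip]
    rw [this, hsmem.2]
  · intro s hsmem
    rw [Finset.mem_filter] at hsmem ⊢
    refine ⟨Finset.mem_univ _, ?_⟩
    have : vd (vflip ∘ s) = - vd s := by
      unfold vd
      rw [← Finset.sum_neg_distrib]
      apply Finset.sum_congr rfl
      intro j _
      rw [Function.comp_apply, stepDir_vflip]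
    rw [this, hsmem.2, neg_neg]
  · intro s _
    funext j
    simp [vflip_vflip]
  · intro s _
    funext j
    simp [vflip_vflip]

lemma card_YN_ge (hx : 1 ≤ x.2) :
    (Finset.univ.filter (fun s : Fin N → Fin 4 => 1 ≤ (walkPos x s N).2)).card
    = ∑ m ∈ Finset.Ioc (-x.2) (N:ℤ), cnt N m := by
  rw [Finset.card_eq_sum_card_fiberwise (f := fun s : Fin N → Fin 4 => vd s)
    (t := Finset.Ioc (-x.2) (N:ℤ))]
  · apply Finset.sum_congr rfl
    intro m hm
    rw [Finset.mem_Ioc] at hm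
    unfold cnt
    congr 1
    ext s
    simp only [Finset.mem_filter, Finset.mem_univ, true_and]
    constructor
    · rintro ⟨-, h⟩; exact h
    · intro h
      refine ⟨?_, h⟩
      rw [walkPos_snd, h]
      omega
  · intro s hsmem
    rw [Finset.mem_coe, Finset.mem_filter] at hsmem
    rw [Finset.mem_coe, Finset.mem_Ioc]
    beta_reduce
    have hb := vd_bound s
    have := hsmem.2
    rw [walkPos_snd] at this
    omega

lemma card_S2_eq (hx : 1 ≤ x.2) :
    (Finset.univ.filter (fun s : Fin N → Fin 4 => (walkPos x s N).2 ≤ -1)).card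
    = ∑ m ∈ Finset.Ioc (x.2) (N:ℤ), cnt N m := by
  rw [Finset.card_eq_sum_card_fiberwise (f := fun s : Fin N → Fin 4 => - vd s)
    (t := Finset.Ioc (x.2) (N:ℤ))]
  · apply Finset.sum_congr rfl
    intro m hm
    rw [Finset.mem_Ioc] at hm
    rw [cnt_symm N m]
    unfold cnt
    congr 1
    ext s
    simp only [Finset.mem_filter, Finset.mem_univ, true_and]
    constructor
    · rintro ⟨-, h⟩; omega
    · intro h
      have h' : -vd s = m := by omega
      refine ⟨?_, h'⟩
      rw [walkPos_snd]
      omega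
  · intro s hsmem
    rw [Finset.mem_coe, Finset.mem_filter] at hsmem
    rw [Finset.mem_coe, Finset.mem_Ioc]
    beta_reduce
    have hb := vd_bound s
    have := hsmem.2
    rw [walkPos_snd] at this
    omega

lemma surv_card (hx : 1 ≤ x.2) (hxN : x.2 ≤ (N:ℤ)) :
    (Finset.univ.filter (fun s : Fin N → Fin 4 => ∀ i ≤ N, 1 ≤ (walkPos x s i).2)).card
      ≤ (2 * x.2).toNat * Nat.centralBinom N := by
  have hconsec : (∑ m ∈ Finset.Ioc (-x.2) (x.2), cnt N m)
      + (∑ m ∈ Finset.Ioc (x.2) ((N:ℤ)), cnt N m)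
      = ∑ m ∈ Finset.Ioc (-x.2) ((N:ℤ)), cnt N m := by
    rw [← Finset.Ioc_union_Ioc_eq_Ioc (show -x.2 ≤ x.2 by omega) hxN, Finset.sum_union]
    apply Finset.disjoint_left.2
    intro m hm1 hm2
    rw [Finset.mem_Ioc] at hm1 hm2
    omega
  have h1 := card_YN_split x hx (N := N)
  have h2 := card_S1_eq_S2 x hx (N := N)
  have h3 := card_YN_ge x hx (N := N)
  have h4 := card_S2_eq x hx (N := N)
  have hkey : (Finset.univ.filter (fun s : Fin N → Fin 4 => ∀ i ≤ N, 1 ≤ (walkPos x s i).2)).card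
      = ∑ m ∈ Finset.Ioc (-x.2) (x.2), cnt N m := by
    omega
  rw [hkey]
  calc ∑ m ∈ Finset.Ioc (-x.2) (x.2), cnt N m
      ≤ (Finset.Ioc (-x.2) (x.2)).card • Nat.centralBinom N :=
        Finset.sum_le_card_nsmul _ _ _ (fun m _ => cnt_le_centralBinom N m)
    _ = (2 * x.2).toNat * Nat.centralBinom N := by
        rw [smul_eq_mul, Int.card_Ioc]
        congr 1
        omega

end Reflection

section Doob

variable (x : ℤ × ℤ) (D : ℕ)

def hdisp {N : ℕ} (s : Fin N → Fin 4) (i : ℕ) : ℤ := (walkPos x s i).1 - x.1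

lemma hdisp_exists {N : ℕ} (s : Fin N → Fin 4) :
    ∃ i, (D:ℤ) ≤ |hdisp x s i| ∨ i = N := ⟨N, Or.inr rfl⟩

def tauH {N : ℕ} (s : Fin N → Fin 4) : ℕ := Nat.find (hdisp_exists x D s)

def SV {N : ℕ} (s : Fin N → Fin 4) : ℤ := hdisp x s (tauH x D s)

lemma hdisp_snoc {N : ℕ} (s : Fin N → Fin 4) (a : Fin 4) {i : ℕ} (hi : i ≤ N) :
    hdisp x (Fin.snoc s a : Fin (N+1) → Fin 4) i = hdisp x s i := by
  unfold hdisp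
  rw [walkPos_snoc x s a i hi]

lemma hdisp_snoc_top {N : ℕ} (s : Fin N → Fin 4) (a : Fin 4) :
    hdisp x (Fin.snoc s a : Fin (N+1) → Fin 4) (N+1) = hdisp x s N + (stepDir a).1 := by
  unfold hdisp
  rw [walkPos_snoc_top]
  simp only [Prod.fst_add]
  ring

lemma tauH_le {N : ℕ} (s : Fin N → Fin 4) : tauH x D s ≤ N :=
  Nat.find_le (Or.inr rfl)

lemma tau_spec_reach {N : ℕ} (s : Fin N → Fin 4)
    (hR : ∃ i ≤ N, (D:ℤ) ≤ |hdisp x s i|) :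
    (D:ℤ) ≤ |hdisp x s (tauH x D s)| ∧ ∀ i' < tauH x D s, ¬ (D:ℤ) ≤ |hdisp x s i'| := by
  obtain ⟨i₀, hi₀N, hi₀⟩ := hR
  have hτi₀ : tauH x D s ≤ i₀ := Nat.find_le (Or.inl hi₀)
  have hmin : ∀ i' < tauH x D s, ¬ ((D:ℤ) ≤ |hdisp x s i'| ∨ i' = N) :=
    fun i' h => Nat.find_min (hdisp_exists x D s) h
  constructor
  · rcases Nat.find_spec (hdisp_exists x D s) with h | h
    · exact h
    · have hτ : tauH x D s = N := h
      have hi : i₀ = N := by omega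
      rw [hτ]
      rw [hi] at hi₀
      exact hi₀
  · intro i' hi'
    have := hmin i' hi'
    tauto

lemma tau_noreach {N : ℕ} (s : Fin N → Fin 4)
    (hNR : ¬ ∃ i ≤ N, (D:ℤ) ≤ |hdisp x s i|) : tauH x D s = N := by
  push_neg at hNR
  have hle := tauH_le x D s
  rcases Nat.lt_or_ge (tauH x D s) N with hcon | hge
  · exfalso
    rcases Nat.find_spec (hdisp_exists x D s) with h | h
    · have h' : (D:ℤ) ≤ |hdisp x s (tauH x D s)| := h
      exact absurd h' (not_le.mpr (hNR _ (le_of_lt hcon)))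
    · have h' : tauH x D s = N := h
      omega
  · omega

lemma tau_snoc_reach {N : ℕ} (s : Fin N → Fin 4) (a : Fin 4)
    (hR : ∃ i ≤ N, (D:ℤ) ≤ |hdisp x s i|) :
    SV x D (Fin.snoc s a : Fin (N+1) → Fin 4) = SV x D s := by
  obtain ⟨hreach, hmin⟩ := tau_spec_reach x D s hR
  have hτN : tauH x D s ≤ N := tauH_le x D s
  have hfind : tauH x D (Fin.snoc s a : Fin (N+1) → Fin 4) = tauH x D s := by
    rw [tauH, Nat.find_eq_iff]
    constructor
    · left
      rw [hdisp_snoc x s a hτN]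
      exact hreach
    · intro i' hi'
      rw [not_or]
      constructor
      · rw [hdisp_snoc x s a (by omega : i' ≤ N)]
        exact hmin i' hi'
      · omega
  unfold SV
  rw [hfind, hdisp_snoc x s a hτN]

lemma tau_snoc_noreach {N : ℕ} (s : Fin N → Fin 4) (a : Fin 4)
    (hNR : ¬ ∃ i ≤ N, (D:ℤ) ≤ |hdisp x s i|) :
    SV x D (Fin.snoc s a : Fin (N+1) → Fin 4) = hdisp x s N + (stepDir a).1 := by
  push_neg at hNR
  have hfind : tauH x D (Fin.snoc s a : Fin (N+1) → Fin 4) = N + 1 := by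
    rw [tauH, Nat.find_eq_iff]
    constructor
    · right; rfl
    · intro i' hi'
      rw [not_or]
      constructor
      · rw [hdisp_snoc x s a (by omega : i' ≤ N)]
        exact not_le.mpr (hNR i' (by omega))
      · omega
  unfold SV
  rw [hfind, hdisp_snoc_top]

lemma doob_sum : ∀ N : ℕ, (2:ℤ) * (∑ s : Fin N → Fin 4, (SV x D s)^2) ≤ N * 4^N := by
  intro N
  induction N with
  | zero =>
      have : ∀ s : Fin 0 → Fin 4, SV x D s = 0 := by
        intro s
        have h0 : tauH x D s = 0 := Nat.le_zero.mp (tauH_le x D s)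
        unfold SV
        rw [h0]
        unfold hdisp
        rw [walkPos_zero]
        ring
      rw [Finset.sum_congr rfl (fun s _ => by rw [this s])]
      simp
  | succ N ih =>
      rw [sum_snoc (fun s => (SV x D s)^2)]
      have key : ∀ s : Fin N → Fin 4,
          (∑ a : Fin 4, (SV x D (Fin.snoc s a : Fin (N+1) → Fin 4))^2)
          ≤ 4 * (SV x D s)^2 + 2 := by
        intro s
        by_cases hR : ∃ i ≤ N, (D:ℤ) ≤ |hdisp x s i|
        · rw [Fin.sum_univ_four]
          rw [tau_snoc_reach x D s 0 hR, tau_snoc_reach x D s 1 hR,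
            tau_snoc_reach x D s 2 hR, tau_snoc_reach x D s 3 hR]
          nlinarith [sq_nonneg (SV x D s)]
        · rw [Fin.sum_univ_four]
          rw [tau_snoc_noreach x D s 0 hR, tau_snoc_noreach x D s 1 hR,
            tau_snoc_noreach x D s 2 hR, tau_snoc_noreach x D s 3 hR]
          have hSV : SV x D s = hdisp x s N := by
            unfold SV
            rw [tau_noreach x D s hR]
          rw [hSV]
          have e0 : (stepDir 0).1 = 1 := rfl
          have e1 : (stepDir 1).1 = -1 := rfl
          have e2 : (stepDir 2).1 = 0 := rfl
          have e3 : (stepDir 3).1 = 0 := rfl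
          rw [e0, e1, e2, e3]
          ring_nf
          nlinarith [sq_nonneg (hdisp x s N)]
      calc (2:ℤ) * ∑ s : Fin N → Fin 4, ∑ a : Fin 4, (SV x D (Fin.snoc s a : Fin (N+1) → Fin 4))^2
          ≤ 2 * ∑ s : Fin N → Fin 4, (4 * (SV x D s)^2 + 2) := by
            apply mul_le_mul_of_nonneg_left _ (by norm_num)
            exact Finset.sum_le_sum (fun s _ => key s)
        _ = 4 * (2 * ∑ s : Fin N → Fin 4, (SV x D s)^2) + 4 * (4^N) := by
            have hcard : (((Finset.univ : Finset (Fin N → Fin 4))).card : ℤ) = 4^N := by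
              rw [Finset.card_univ]
              simp
            rw [Finset.sum_add_distrib, ← Finset.mul_sum, Finset.sum_const, nsmul_eq_mul, hcard]
            ring
        _ ≤ 4 * ((N:ℤ) * 4^N) + 4 * (4^N) := by
            have := mul_le_mul_of_nonneg_left ih (by norm_num : (0:ℤ) ≤ 4)
            linarith
        _ = ((N:ℕ)+1 : ℤ) * 4^(N+1) := by ring
        _ = ((N+1 : ℕ) : ℤ) * 4^(N+1) := by push_cast; ring

lemma reach_card {N : ℕ} :
    ((Finset.univ.filter (fun s : Fin N → Fin 4 => ∃ i ≤ N, (D:ℤ) ≤ |hdisp x s i|)).card : ℤ)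
      * (D:ℤ)^2 * 2 ≤ N * 4^N := by
  have h1 : ∀ s ∈ Finset.univ.filter (fun s : Fin N → Fin 4 => ∃ i ≤ N, (D:ℤ) ≤ |hdisp x s i|),
      (D:ℤ)^2 ≤ (SV x D s)^2 := by
    intro s hsmem
    rw [Finset.mem_filter] at hsmem
    have := (tau_spec_reach x D s hsmem.2).1
    calc (D:ℤ)^2 = |(D:ℤ)|^2 := by rw [abs_of_nonneg (by positivity)]
      _ ≤ |hdisp x s (tauH x D s)|^2 := by
          apply pow_le_pow_left₀ (abs_nonneg _) _ 2
          rw [abs_of_nonneg (by positivity : (0:ℤ) ≤ (D:ℤ))]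
          exact this
      _ = (SV x D s)^2 := by rw [sq_abs]; rfl
  have h2 : ((Finset.univ.filter (fun s : Fin N → Fin 4 => ∃ i ≤ N, (D:ℤ) ≤ |hdisp x s i|)).card : ℤ)
      * (D:ℤ)^2 ≤ ∑ s : Fin N → Fin 4, (SV x D s)^2 := by
    calc ((Finset.univ.filter (fun s : Fin N → Fin 4 => ∃ i ≤ N, (D:ℤ) ≤ |hdisp x s i|)).card : ℤ) * (D:ℤ)^2
        = ∑ _s ∈ Finset.univ.filter (fun s : Fin N → Fin 4 => ∃ i ≤ N, (D:ℤ) ≤ |hdisp x s i|), (D:ℤ)^2 := by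
          rw [Finset.sum_const, nsmul_eq_mul]
      _ ≤ ∑ s ∈ Finset.univ.filter (fun s : Fin N → Fin 4 => ∃ i ≤ N, (D:ℤ) ≤ |hdisp x s i|), (SV x D s)^2 :=
          Finset.sum_le_sum h1
      _ ≤ ∑ s : Fin N → Fin 4, (SV x D s)^2 :=
          Finset.sum_le_sum_of_subset_of_nonneg (Finset.filter_subset _ _)
            (fun s _ _ => sq_nonneg _)
  have h3 := doob_sum x D N
  nlinarith [h2, h3]

end Doob

section Master

variable (x : ℤ × ℤ) (A B : Set (ℤ × ℤ))

def PkP (k : ℕ) (s : Fin k → Fin 4) : Prop :=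
  (∀ i < k, walkPos x s i ∉ A ∪ B) ∧ walkPos x s k ∈ A ∧ walkPos x s k ∉ B

def qk (k : ℕ) : ℕ := (Finset.univ.filter (PkP x A B k)).card

lemma hitProb_eq : hitProbBefore x A B = ∑' k, (qk x A B k : ℝ)/4^k := by
  unfold hitProbBefore qk PkP
  congr 1
  funext k
  congr 2
  rw [Nat.card_eq_fintype_card, Fintype.card_subtype]
  congr 1
  ext s
  simp only [Finset.mem_filter]

def ExtE (K k : ℕ) : Finset (Fin K → Fin 4) :=
  Finset.univ.filter (fun s => ∃ hk : k ≤ K, PkP x A B k (fun j => s (Fin.castLE hk j)))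

lemma ExtE_card (K k : ℕ) (hk : k ≤ K) :
    (ExtE x A B K k).card = qk x A B k * 4^(K-k) := by
  unfold ExtE qk
  rw [← card_cylinder (PkP x A B k) K hk]
  congr 1
  ext s
  simp only [Finset.mem_filter, Finset.mem_univ, true_and]
  exact ⟨fun ⟨_, h⟩ => h, fun h => ⟨hk, h⟩⟩

lemma ExtE_disj_aux (K k k' : ℕ) (hkk : k < k') (s : Fin K → Fin 4)
    (h1 : s ∈ ExtE x A B K k) (h2 : s ∈ ExtE x A B K k') : False := by
  unfold ExtE at h1 h2
  rw [Finset.mem_filter] at h1 h2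
  obtain ⟨-, hk, hP1⟩ := h1
  obtain ⟨-, hk', hP2⟩ := h2
  have e1 : walkPos x (fun j => s (Fin.castLE hk j)) k = walkPos x s k :=
    walkPos_castLE x hk s k le_rfl
  have e2 : walkPos x (fun j => s (Fin.castLE hk' j)) k = walkPos x s k :=
    walkPos_castLE x hk' s k (le_of_lt hkk)
  have hinA : walkPos x s k ∈ A := by rw [← e1]; exact hP1.2.1
  have hnot : walkPos x s k ∉ A ∪ B := by rw [← e2]; exact hP2.1 k hkk
  exact hnot (Set.mem_union_left _ hinA)

lemma ExtE_disj (K : ℕ) {k k' : ℕ} (hne : k ≠ k') :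
    Disjoint (ExtE x A B K k) (ExtE x A B K k') := by
  rw [Finset.disjoint_left]
  intro s hs1 hs2
  rcases Nat.lt_or_ge k k' with h | h
  · exact ExtE_disj_aux x A B K k k' h s hs1 hs2
  · exact ExtE_disj_aux x A B K k' k (by omega) s hs2 hs1

lemma sum_part1 (N D : ℕ) (hA : ∀ v ∈ A, (D:ℤ) ≤ |v.1 - x.1|) :
    ∑ k ∈ Finset.range (N+1), qk x A B k * 4^(N-k)
      ≤ (Finset.univ.filter (fun s : Fin N → Fin 4 => ∃ i ≤ N, (D:ℤ) ≤ |hdisp x s i|)).card := by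
  have hsum : ∑ k ∈ Finset.range (N+1), qk x A B k * 4^(N-k)
      = ((Finset.range (N+1)).biUnion (fun k => ExtE x A B N k)).card := by
    rw [Finset.card_biUnion (fun k _ k' _ hne => ExtE_disj x A B N hne)]
    apply Finset.sum_congr rfl
    intro k hk
    rw [Finset.mem_range] at hk
    rw [ExtE_card x A B N k (by omega)]
  rw [hsum]
  apply Finset.card_le_card
  intro s hs
  rw [Finset.mem_biUnion] at hs
  obtain ⟨k, hkmem, hsk⟩ := hs
  rw [Finset.mem_range] at hkmem
  unfold ExtE at hsk
  rw [Finset.mem_filter] at hsk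
  obtain ⟨-, hk, hP⟩ := hsk
  rw [Finset.mem_filter]
  refine ⟨Finset.mem_univ _, k, by omega, ?_⟩
  have e1 : walkPos x (fun j => s (Fin.castLE hk j)) k = walkPos x s k :=
    walkPos_castLE x hk s k le_rfl
  have := hA _ hP.2.1
  rw [e1] at this
  exact this

lemma sum_part2 (N K : ℕ) (hNK : N ≤ K)
    (hB : ∀ (k:ℕ) (s : Fin k → Fin 4) (i:ℕ), (∀ i' ≤ i, walkPos x s i' ∉ B)
      → 1 ≤ (walkPos x s i).2) :
    ∑ k ∈ Finset.Ico (N+1) (K+1), qk x A B k * 4^(K-k)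
      ≤ (Finset.univ.filter
          (fun s : Fin N → Fin 4 => ∀ i ≤ N, 1 ≤ (walkPos x s i).2)).card * 4^(K-N) := by
  have hsum : ∑ k ∈ Finset.Ico (N+1) (K+1), qk x A B k * 4^(K-k)
      = ((Finset.Ico (N+1) (K+1)).biUnion (fun k => ExtE x A B K k)).card := by
    rw [Finset.card_biUnion (fun k _ k' _ hne => ExtE_disj x A B K hne)]
    apply Finset.sum_congr rfl
    intro k hk
    rw [Finset.mem_Ico] at hk
    rw [ExtE_card x A B K k (by omega)]
  rw [hsum]
  rw [← card_cylinder (fun t : Fin N → Fin 4 => ∀ i ≤ N, 1 ≤ (walkPos x t i).2) K hNK]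
  apply Finset.card_le_card
  intro s hs
  rw [Finset.mem_biUnion] at hs
  obtain ⟨k, hkmem, hsk⟩ := hs
  rw [Finset.mem_Ico] at hkmem
  unfold ExtE at hsk
  rw [Finset.mem_filter] at hsk
  obtain ⟨-, hk, hP⟩ := hsk
  rw [Finset.mem_filter]
  refine ⟨Finset.mem_univ _, ?_⟩
  intro i hi
  have havoid : ∀ i' ≤ i, walkPos x (fun j => s (Fin.castLE hk j)) i' ∉ B := by
    intro i' hi'
    have h1 : i' < k := by omega
    have := hP.1 i' h1
    intro hmem
    exact this (Set.mem_union_right _ hmem)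
  have hres := hB k (fun j => s (Fin.castLE hk j)) i havoid
  have e1 : walkPos x (fun j => s (Fin.castLE hk j)) i = walkPos x s i :=
    walkPos_castLE x hk s i (by omega)
  rw [e1] at hres
  have e2 : walkPos x (fun j => s (Fin.castLE hNK j)) i = walkPos x s i :=
    walkPos_castLE x hNK s i hi
  rw [e2]
  exact hres

lemma master_bound (N D : ℕ)
    (hA : ∀ v ∈ A, (D:ℤ) ≤ |v.1 - x.1|)
    (hB : ∀ (k:ℕ) (s : Fin k → Fin 4) (i:ℕ), (∀ i' ≤ i, walkPos x s i' ∉ B)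
      → 1 ≤ (walkPos x s i).2) :
    hitProbBefore x A B ≤
      (((Finset.univ.filter (fun s : Fin N → Fin 4 => ∃ i ≤ N, (D:ℤ) ≤ |hdisp x s i|)).card : ℝ)
        + ((Finset.univ.filter
            (fun s : Fin N → Fin 4 => ∀ i ≤ N, 1 ≤ (walkPos x s i).2)).card : ℝ)) / 4^N := by
  set R1 : ℝ := ((Finset.univ.filter (fun s : Fin N → Fin 4 => ∃ i ≤ N, (D:ℤ) ≤ |hdisp x s i|)).card : ℝ) with hR1
  set R2 : ℝ := ((Finset.univ.filter
      (fun s : Fin N → Fin 4 => ∀ i ≤ N, 1 ≤ (walkPos x s i).2)).card : ℝ) with hR2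
  rw [hitProb_eq]
  have hterm_nonneg : ∀ k : ℕ, 0 ≤ (qk x A B k : ℝ)/4^k := by
    intro k
    positivity
  have hpartial : ∀ (F : Finset ℕ), ∑ k ∈ F, (qk x A B k : ℝ)/4^k ≤ (R1 + R2) / 4^N := by
    intro F
    set K := max (F.sup id) N with hK
    have hNK : N ≤ K := le_max_right _ _
    have hFsub : F ⊆ Finset.range (K+1) := by
      intro k hkF
      rw [Finset.mem_range]
      have : k ≤ F.sup id := Finset.le_sup (f := id) hkF
      omega
    have step1 : ∑ k ∈ F, (qk x A B k : ℝ)/4^k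
        ≤ ∑ k ∈ Finset.range (K+1), (qk x A B k : ℝ)/4^k :=
      Finset.sum_le_sum_of_subset_of_nonneg hFsub (fun k _ _ => hterm_nonneg k)
    have hsplit : ∑ k ∈ Finset.range (K+1), (qk x A B k : ℝ)/4^k
        = ∑ k ∈ Finset.range (N+1), (qk x A B k : ℝ)/4^k
          + ∑ k ∈ Finset.Ico (N+1) (K+1), (qk x A B k : ℝ)/4^k := by
      rw [Finset.range_eq_Ico]
      rw [← Finset.sum_Ico_consecutive _ (by omega : 0 ≤ N+1) (by omega : N+1 ≤ K+1)]
      rw [Finset.range_eq_Ico]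
    have bound1 : ∑ k ∈ Finset.range (N+1), (qk x A B k : ℝ)/4^k ≤ R1 / 4^N := by
      have cast1 : ∀ k ∈ Finset.range (N+1),
          (qk x A B k : ℝ)/4^k = ((qk x A B k * 4^(N-k) : ℕ) : ℝ)/4^N := by
        intro k hk
        rw [Finset.mem_range] at hk
        push_cast
        rw [div_eq_div_iff (by positivity) (by positivity)]
        have : (4:ℝ)^N = 4^(N-k) * 4^k := by
          rw [← pow_add]
          congr 1
          omega
        rw [this]
        ring
      rw [Finset.sum_congr rfl cast1, ← Finset.sum_div]
      apply div_le_div_of_nonneg_right _ (by positivity)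
      · rw [← Nat.cast_sum]
        rw [hR1]
        exact_mod_cast sum_part1 x A B N D hA
    have bound2 : ∑ k ∈ Finset.Ico (N+1) (K+1), (qk x A B k : ℝ)/4^k ≤ R2 / 4^N := by
      have cast2 : ∀ k ∈ Finset.Ico (N+1) (K+1),
          (qk x A B k : ℝ)/4^k = ((qk x A B k * 4^(K-k) : ℕ) : ℝ)/4^K := by
        intro k hk
        rw [Finset.mem_Ico] at hk
        push_cast
        rw [div_eq_div_iff (by positivity) (by positivity)]
        have : (4:ℝ)^K = 4^(K-k) * 4^k := by
          rw [← pow_add]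
          congr 1
          omega
        rw [this]
        ring
      rw [Finset.sum_congr rfl cast2, ← Finset.sum_div]
      have hnum := sum_part2 x A B N K hNK hB
      have hcast : (∑ k ∈ Finset.Ico (N+1) (K+1), (qk x A B k * 4^(K-k) : ℕ) : ℝ)
          ≤ (((Finset.univ.filter
            (fun s : Fin N → Fin 4 => ∀ i ≤ N, 1 ≤ (walkPos x s i).2)).card * 4^(K-N) : ℕ) : ℝ) := by
        exact_mod_cast hnum
      calc (∑ k ∈ Finset.Ico (N+1) (K+1), ((qk x A B k * 4^(K-k) : ℕ) : ℝ))/4^K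
          ≤ (((Finset.univ.filter
              (fun s : Fin N → Fin 4 => ∀ i ≤ N, 1 ≤ (walkPos x s i).2)).card * 4^(K-N) : ℕ) : ℝ)/4^K := by
            apply div_le_div_of_nonneg_right _ (by positivity)
            rw [← Nat.cast_sum]
            exact_mod_cast hnum
        _ = R2 / 4^N := by
            rw [hR2]
            push_cast
            rw [div_eq_div_iff (by positivity) (by positivity)]
            have : (4:ℝ)^K = 4^(K-N) * 4^N := by
              rw [← pow_add]
              congr 1
              omega
            rw [this]
            ring
    calc ∑ k ∈ F, (qk x A B k : ℝ)/4^k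
        ≤ ∑ k ∈ Finset.range (K+1), (qk x A B k : ℝ)/4^k := step1
      _ = _ := hsplit
      _ ≤ R1/4^N + R2/4^N := add_le_add bound1 bound2
      _ = (R1 + R2)/4^N := by ring
  have hsummable : Summable (fun k => (qk x A B k : ℝ)/4^k) :=
    summable_of_sum_le hterm_nonneg hpartial
  exact hsummable.tsum_le_of_sum_le hpartial

end Master

section Box

lemma mem_boxF {n : ℕ} {v : ℤ × ℤ} :
    v ∈ boxF n ↔ 0 ≤ v.1 ∧ v.1 ≤ n ∧ 0 ≤ v.2 ∧ v.2 ≤ n := by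
  unfold boxF
  rw [Finset.mem_Icc]
  constructor
  · rintro ⟨⟨h1, h2⟩, h3, h4⟩
    exact ⟨h1, h3, h2, h4⟩
  · rintro ⟨h1, h2, h3, h4⟩
    exact ⟨⟨h1, h3⟩, h2, h4⟩

lemma interior_of_not_bdry {n : ℕ} {v : ℤ × ℤ} (hv : v ∈ boxF n)
    (hnb : v ∉ bdry ↑(boxF n)) :
    1 ≤ v.1 ∧ v.1 ≤ (n:ℤ) - 1 ∧ 1 ≤ v.2 ∧ v.2 ≤ (n:ℤ) - 1 := by
  rw [mem_boxF] at hv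
  by_contra hcon
  apply hnb
  refine ⟨Finset.mem_coe.mpr (mem_boxF.mpr hv), ?_⟩
  push_neg at hcon
  -- one of the four coordinates is extremal
  rcases (by omega : v.1 = 0 ∨ v.1 = (n:ℤ) ∨ v.2 = 0 ∨ v.2 = (n:ℤ)) with h | h | h | h
  · refine ⟨(v.1 - 1, v.2), ?_, ?_⟩
    · rw [Finset.mem_coe, mem_boxF]
      intro hmem
      omega
    · unfold adj
      simp only
      have : v.1 - (v.1 - 1) = 1 := by ring
      rw [this]
      simp
  · refine ⟨(v.1 + 1, v.2), ?_, ?_⟩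
    · rw [Finset.mem_coe, mem_boxF]
      intro hmem
      omega
    · unfold adj
      simp only
      have : v.1 - (v.1 + 1) = -1 := by ring
      rw [this]
      simp
  · refine ⟨(v.1, v.2 - 1), ?_, ?_⟩
    · rw [Finset.mem_coe, mem_boxF]
      intro hmem
      omega
    · unfold adj
      simp only
      have : v.2 - (v.2 - 1) = 1 := by ring
      rw [this]
      simp
  · refine ⟨(v.1, v.2 + 1), ?_, ?_⟩
    · rw [Finset.mem_coe, mem_boxF]
      intro hmem
      omega
    · unfold adj
      simp only
      have : v.2 - (v.2 + 1) = -1 := by ring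
      rw [this]
      simp

lemma stepDir_bounds (a : Fin 4) :
    (-1 ≤ (stepDir a).1 ∧ (stepDir a).1 ≤ 1) ∧ (-1 ≤ (stepDir a).2 ∧ (stepDir a).2 ≤ 1) := by
  fin_cases a <;> norm_num [stepDir]

lemma stay_interior (n : ℕ) (x : ℤ × ℤ)
    (hx : 1 ≤ x.1 ∧ x.1 ≤ (n:ℤ) - 1 ∧ 1 ≤ x.2 ∧ x.2 ≤ (n:ℤ) - 1) :
    ∀ (k : ℕ) (s : Fin k → Fin 4) (i : ℕ),
      (∀ i' ≤ i, walkPos x s i' ∉ bdry ↑(boxF n)) → 1 ≤ (walkPos x s i).2 := by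
  intro k s
  have main : ∀ i : ℕ, (∀ i' ≤ i, walkPos x s i' ∉ bdry ↑(boxF n)) →
      1 ≤ (walkPos x s i).1 ∧ (walkPos x s i).1 ≤ (n:ℤ) - 1
        ∧ 1 ≤ (walkPos x s i).2 ∧ (walkPos x s i).2 ≤ (n:ℤ) - 1 := by
    intro i
    induction i with
    | zero =>
        intro _
        rw [walkPos_zero]
        exact hx
    | succ i ih =>
        intro havoid
        have hprev := ih (fun i' hi' => havoid i' (by omega))
        have hbox : walkPos x s (i+1) ∈ boxF n := by
          rcases Nat.lt_or_ge i k with hik | hik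
          · rw [walkPos_succ x s i hik]
            have hb := stepDir_bounds (s ⟨i, hik⟩)
            rw [mem_boxF]
            simp only [Prod.fst_add, Prod.snd_add]
            omega
          · rw [walkPos_stable x s (by omega : k ≤ i+1), ← walkPos_stable x s hik]
            rw [mem_boxF]
            omega
        exact interior_of_not_bdry hbox (havoid (i+1) le_rfl)
  intro i havoid
  exact (main i havoid).2.2.1

end Box

/-- **Hitting a well-separated ball before the boundary is unlikely:** there is an
absolute constant `C > 0` so that for `1 ≤ r`, `6r ≤ ℓ`, `2ℓ ≤ n`, balls `𝒞_i` of
radius `r` centered at `o_i = (iℓ, 2r)` for `1 ≤ i ≤ ⌊n/(2ℓ)⌋`, any `i ≠ j` and any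
`x ∈ 𝒞_i`, the walk started at `x` satisfies `P_x(τ_{∂𝒞_j} < τ_{∂A_n}) ≤ C √(r/ℓ)`. -/
theorem hitting_far_ball_before_boundary :
    ∃ C > (0 : ℝ), ∀ n r ℓ : ℕ, 1 ≤ n → 1 ≤ r → 6 * r ≤ ℓ → 2 * ℓ ≤ n →
      ∀ i j : ℕ, 1 ≤ i → i ≤ n / (2 * ℓ) → 1 ≤ j → j ≤ n / (2 * ℓ) → i ≠ j →
        ∀ x ∈ ballSet ((i * ℓ : ℤ), (2 * r : ℤ)) r,
          hitProbBefore x (bdry (ballSet ((j * ℓ : ℤ), (2 * r : ℤ)) r)) (bdry ↑(boxF n))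
            ≤ C * Real.sqrt ((r : ℝ) / (ℓ : ℝ)) := by
  refine ⟨9, by norm_num, ?_⟩
  intro n r ℓ hn hr h6r h2ℓ i j hi1 hi2 hj1 hj2 hij x hx
  -- numeric setup
  obtain ⟨D, hD⟩ : ∃ d : ℕ, d = ℓ - 2*r := ⟨_, rfl⟩
  obtain ⟨N, hN⟩ : ∃ m : ℕ, m = r * D := ⟨_, rfl⟩
  have hDZ : (D:ℤ) = (ℓ:ℤ) - 2*r := by omega
  have hD4 : 4 * r ≤ D := by omega
  -- ball membership bounds
  have hxball : (x.1 - (i*ℓ:ℤ))^2 + (x.2 - (2*r:ℤ))^2 ≤ (r:ℤ)^2 := hx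
  have hx1 : -(r:ℤ) ≤ x.1 - (i:ℤ)*ℓ ∧ x.1 - (i:ℤ)*ℓ ≤ r := by
    constructor <;> nlinarith [sq_nonneg (x.1 - (i:ℤ)*ℓ + r), sq_nonneg (x.1 - (i:ℤ)*ℓ - r),
      sq_nonneg (x.2 - 2*(r:ℤ)), (by positivity : (0:ℤ) ≤ (r:ℤ)^2)]
  have hx2 : -(r:ℤ) ≤ x.2 - 2*(r:ℤ) ∧ x.2 - 2*(r:ℤ) ≤ r := by
    constructor <;> nlinarith [sq_nonneg (x.2 - 2*(r:ℤ) + r), sq_nonneg (x.2 - 2*(r:ℤ) - r),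
      sq_nonneg (x.1 - (i:ℤ)*ℓ)]
  -- center bounds
  have hi2' : i * (2*ℓ) ≤ n := by
    rw [Nat.le_div_iff_mul_le (by omega : 0 < 2*ℓ)] at hi2
    exact hi2
  have hj2' : j * (2*ℓ) ≤ n := by
    rw [Nat.le_div_iff_mul_le (by omega : 0 < 2*ℓ)] at hj2
    exact hj2
  have hzi1 : (ℓ:ℤ) ≤ (i:ℤ)*ℓ := by
    have : (1:ℤ) ≤ (i:ℤ) := by exact_mod_cast hi1
    nlinarith [(by positivity : (0:ℤ) ≤ (ℓ:ℤ))]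
  have hzj1 : (ℓ:ℤ) ≤ (j:ℤ)*ℓ := by
    have : (1:ℤ) ≤ (j:ℤ) := by exact_mod_cast hj1
    nlinarith [(by positivity : (0:ℤ) ≤ (ℓ:ℤ))]
  have hzi2 : 2*((i:ℤ)*ℓ) ≤ (n:ℤ) := by
    have : ((i * (2*ℓ) : ℕ) : ℤ) ≤ (n:ℤ) := by exact_mod_cast hi2'
    push_cast at this
    linarith
  have hzj2 : 2*((j:ℤ)*ℓ) ≤ (n:ℤ) := by
    have : ((j * (2*ℓ) : ℕ) : ℤ) ≤ (n:ℤ) := by exact_mod_cast hj2'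
    push_cast at this
    linarith
  have hsep : (ℓ:ℤ) ≤ (j:ℤ)*ℓ - (i:ℤ)*ℓ ∨ (ℓ:ℤ) ≤ (i:ℤ)*ℓ - (j:ℤ)*ℓ := by
    rcases lt_or_gt_of_ne hij with h | h
    · left
      have h1 : (i:ℤ) + 1 ≤ (j:ℤ) := by exact_mod_cast h
      nlinarith [(by positivity : (0:ℤ) ≤ (ℓ:ℤ))]
    · right
      have h1 : (j:ℤ) + 1 ≤ (i:ℤ) := by exact_mod_cast h
      nlinarith [(by positivity : (0:ℤ) ≤ (ℓ:ℤ))]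
  -- hypothesis hA
  have hA : ∀ v ∈ bdry (ballSet ((j * ℓ : ℤ), (2 * r : ℤ)) r), (D:ℤ) ≤ |v.1 - x.1| := by
    intro v hv
    have hvball : (v.1 - (j*ℓ:ℤ))^2 + (v.2 - (2*r:ℤ))^2 ≤ (r:ℤ)^2 := hv.1
    have hv1 : -(r:ℤ) ≤ v.1 - (j:ℤ)*ℓ ∧ v.1 - (j:ℤ)*ℓ ≤ r := by
      constructor <;> nlinarith [sq_nonneg (v.1 - (j:ℤ)*ℓ + r), sq_nonneg (v.1 - (j:ℤ)*ℓ - r),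
        sq_nonneg (v.2 - 2*(r:ℤ)), (by positivity : (0:ℤ) ≤ (r:ℤ)^2)]
    rcases hsep with h | h
    · apply le_abs.mpr
      left
      omega
    · apply le_abs.mpr
      right
      omega
  -- hypothesis hB
  have hxint : 1 ≤ x.1 ∧ x.1 ≤ (n:ℤ) - 1 ∧ 1 ≤ x.2 ∧ x.2 ≤ (n:ℤ) - 1 := by
    obtain ⟨ha, hb⟩ := hx1
    obtain ⟨hc, hd⟩ := hx2
    constructor
    · omega
    constructor
    · omega
    constructor
    · omega
    · omega
  have hB := stay_interior n x hxint
  -- master bound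
  have hmaster := master_bound x (bdry (ballSet ((j * ℓ : ℤ), (2 * r : ℤ)) r))
    (bdry ↑(boxF n)) N D hA hB
  set c1 : ℕ := (Finset.univ.filter
    (fun s : Fin N → Fin 4 => ∃ i ≤ N, (D:ℤ) ≤ |hdisp x s i|)).card with hc1
  set c2 : ℕ := (Finset.univ.filter
    (fun s : Fin N → Fin 4 => ∀ i ≤ N, 1 ≤ (walkPos x s i).2)).card with hc2
  -- positivity facts
  have hrR : (1:ℝ) ≤ (r:ℝ) := by exact_mod_cast hr
  have hℓR : (0:ℝ) < (ℓ:ℝ) := by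
    have : 0 < ℓ := by omega
    exact_mod_cast this
  have h6rR : 6*(r:ℝ) ≤ (ℓ:ℝ) := by exact_mod_cast h6r
  have hDR : ((D:ℝ)) = (ℓ:ℝ) - 2*r := by
    have : ((D:ℕ):ℤ) = (ℓ:ℤ) - 2*r := hDZ
    exact_mod_cast this
  have hDpos : (0:ℝ) < (D:ℝ) := by
    have : 0 < D := by omega
    exact_mod_cast this
  have hNR : ((N:ℝ)) = (r:ℝ) * D := by
    rw [hN]
    push_cast
    ring
  have h4pos : (0:ℝ) < 4^N := by positivity
  -- bound 1 : c1/4^N ≤ sqrt (r/ℓ)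
  have hreach := reach_card x D (N := N)
  have hb1 : (c1:ℝ)/4^N ≤ Real.sqrt ((r:ℝ)/ℓ) := by
    have hreachR : (c1:ℝ) * (D:ℝ)^2 * 2 ≤ (N:ℝ) * 4^N := by
      rw [hc1]
      exact_mod_cast hreach
    have step1 : (c1:ℝ)/4^N ≤ (r:ℝ)/(2*D) := by
      rw [div_le_div_iff₀ h4pos (by positivity)]
      nlinarith [hreachR, hNR]
    have step2 : (r:ℝ)/(2*D) ≤ (r:ℝ)/ℓ := by
      rw [div_le_div_iff₀ (by positivity) hℓR]
      nlinarith
    have step3 : (r:ℝ)/ℓ ≤ Real.sqrt ((r:ℝ)/ℓ) := by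
      have ht0 : (0:ℝ) ≤ (r:ℝ)/ℓ := by positivity
      have ht1 : (r:ℝ)/ℓ ≤ 1 := by
        rw [div_le_one hℓR]
        linarith
      have : (r:ℝ)/ℓ = Real.sqrt (((r:ℝ)/ℓ)^2) := (Real.sqrt_sq ht0).symm
      rw [this]
      apply Real.sqrt_le_sqrt
      nlinarith
    linarith
  -- bound 2 : c2/4^N ≤ 8 * sqrt (r/ℓ)
  have hx2ge1 : 1 ≤ x.2 := by omega
  have hx2le : x.2 ≤ 3*(r:ℤ) := by omega
  have hx2leN : x.2 ≤ (N:ℤ) := by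
    have : (3:ℤ)*r ≤ (N:ℤ) := by
      have : ((N:ℕ):ℤ) = (r:ℤ)*D := by rw [hN]; push_cast; ring
      rw [this]
      nlinarith [(by exact_mod_cast hr : (1:ℤ) ≤ (r:ℤ)), (by omega : (4:ℤ) ≤ (D:ℤ))]
    omega
  have hsurv := surv_card x (N := N) hx2ge1 hx2leN
  have hb2 : (c2:ℝ)/4^N ≤ 8 * Real.sqrt ((r:ℝ)/ℓ) := by
    have hc2le : c2 ≤ 6*r*(Nat.centralBinom N) := by
      calc c2 ≤ (2 * x.2).toNat * Nat.centralBinom N := hsurv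
        _ ≤ 6*r*(Nat.centralBinom N) := by
            apply Nat.mul_le_mul_right
            omega
    have hcb := centralBinom_sqrt N
    have hsqrtpos : (0:ℝ) < Real.sqrt ((N:ℝ)+1) := by
      apply Real.sqrt_pos.mpr
      positivity
    have hstep1 : (c2:ℝ)/4^N ≤ 6*(r:ℝ)/Real.sqrt ((N:ℝ)+1) := by
      rw [div_le_div_iff₀ h4pos hsqrtpos]
      calc (c2:ℝ) * Real.sqrt ((N:ℝ)+1)
          ≤ (6*(r:ℝ)*(Nat.centralBinom N)) * Real.sqrt ((N:ℝ)+1) := by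
            apply mul_le_mul_of_nonneg_right _ (Real.sqrt_nonneg _)
            exact_mod_cast hc2le
        _ = (6*(r:ℝ)) * ((Nat.centralBinom N : ℝ) * Real.sqrt ((N:ℝ)+1)) := by ring
        _ ≤ (6*(r:ℝ)) * 4^N := by
            apply mul_le_mul_of_nonneg_left hcb (by positivity)
        _ = 6*(r:ℝ) * 4^N := by ring
    have hstep2 : 6*(r:ℝ)/Real.sqrt ((N:ℝ)+1) ≤ 8 * Real.sqrt ((r:ℝ)/ℓ) := by
      rw [div_le_iff₀ hsqrtpos]
      have hmul : Real.sqrt ((r:ℝ)/ℓ) * Real.sqrt ((N:ℝ)+1)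
          = Real.sqrt (((r:ℝ)/ℓ) * ((N:ℝ)+1)) :=
        (Real.sqrt_mul (by positivity : (0:ℝ) ≤ (r:ℝ)/ℓ) _).symm
      rw [mul_assoc, hmul]
      have hkey : (6*(r:ℝ)/8)^2 ≤ ((r:ℝ)/ℓ) * ((N:ℝ)+1) := by
        rw [div_mul_eq_mul_div, le_div_iff₀ hℓR]
        nlinarith [mul_nonneg (mul_nonneg (by linarith : (0:ℝ) ≤ (r:ℝ)) (by linarith : (0:ℝ) ≤ (r:ℝ))) (by linarith : (0:ℝ) ≤ 28*(ℓ:ℝ) - 128*r), hNR, hDR]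
      have h68 : (0:ℝ) ≤ 6*(r:ℝ)/8 := by positivity
      have := (Real.le_sqrt h68 (by positivity)).mpr hkey
      linarith
    linarith
  -- combine
  calc hitProbBefore x (bdry (ballSet ((j * ℓ : ℤ), (2 * r : ℤ)) r)) (bdry ↑(boxF n))
      ≤ ((c1:ℝ) + (c2:ℝ))/4^N := hmaster
    _ = (c1:ℝ)/4^N + (c2:ℝ)/4^N := by ring
    _ ≤ Real.sqrt ((r:ℝ)/ℓ) + 8 * Real.sqrt ((r:ℝ)/ℓ) := add_le_add hb1 hb2
    _ = 9 * Real.sqrt ((r:ℝ)/ℓ) := by ring
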